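/- Let γ > 0, ρ ∈ (0,1), and λ, μ ≥ 0 satisfy λ² ≤ γ and μ² ≤ γ. If λ²ρ²/(γ − λ² + λ²ρ²) + μ²ρ²/(γ − μ² + μ²ρ²) > 1, then A₊ > γ, where A₊ = (λ² + μ² + √((λ²−μ²)² + 4ρ⁴λ²μ²))/2. (This is the threshold claim proved inside Lemmas 2.2, 2.6, 2.10 and 2.14: the condition F(λ,μ,ρ,γ) > 1 together with λ², μ² ≤ γ forces the top transfer-matrix eigenvalue A₊ to exceed γ; note that under these hypotheses both denominators γ − λ² + λ²ρ² and γ − μ² + μ²ρ² are strictly positive.) -/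
import Mathlib


/-- the top transfer-matrix eigenvalue
`A₊ = (λ² + μ² + √((λ²−μ²)² + 4ρ⁴λ²μ²))/2`. -/
noncomputable def Aplus (lam mu rho : ℝ) : ℝ :=
  (lam ^ 2 + mu ^ 2 + Real.sqrt ((lam ^ 2 - mu ^ 2) ^ 2 + 4 * rho ^ 4 * lam ^ 2 * mu ^ 2)) / 2

/-- threshold claim inside Lemmas 2.2, 2.6, 2.10, 2.14:
Let `γ > 0`, `ρ ∈ (0,1)`, and `λ, μ ≥ 0` with `λ² ≤ γ`, `μ² ≤ γ`.  If
`λ²ρ²/(γ − λ² + λ²ρ²) + μ²ρ²/(γ − μ² + μ²ρ²) > 1`, then `A₊ > γ`. -/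
theorem stmt2 (γ lam mu rho : ℝ) (hγ : 0 < γ) (hrho : 0 < rho ∧ rho < 1)
    (hlam : 0 ≤ lam) (hmu : 0 ≤ mu) (hlam2 : lam ^ 2 ≤ γ) (hmu2 : mu ^ 2 ≤ γ)
    (hF : 1 < lam ^ 2 * rho ^ 2 / (γ - lam ^ 2 + lam ^ 2 * rho ^ 2)
          + mu ^ 2 * rho ^ 2 / (γ - mu ^ 2 + mu ^ 2 * rho ^ 2)) :
    γ < Aplus lam mu rho := by
  obtain ⟨hr0, hr1⟩ := hrho
  have hrs : rho ^ 2 < 1 := by nlinarith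
  have h1 : 0 < γ - lam ^ 2 + lam ^ 2 * rho ^ 2 := by
    nlinarith [mul_nonneg (sub_nonneg.2 hlam2) (sub_nonneg.2 hrs.le),
      mul_pos hγ (pow_pos hr0 2)]
  have h2 : 0 < γ - mu ^ 2 + mu ^ 2 * rho ^ 2 := by
    nlinarith [mul_nonneg (sub_nonneg.2 hmu2) (sub_nonneg.2 hrs.le),
      mul_pos hγ (pow_pos hr0 2)]
  rw [div_add_div _ _ (ne_of_gt h1) (ne_of_gt h2), lt_div_iff₀ (mul_pos h1 h2)] at hF
  have key : (γ - lam ^ 2) * (γ - mu ^ 2) < lam ^ 2 * mu ^ 2 * rho ^ 4 := by nlinarith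
  set D := (lam ^ 2 - mu ^ 2) ^ 2 + 4 * rho ^ 4 * lam ^ 2 * mu ^ 2 with hD
  have hsq : 2 * γ - lam ^ 2 - mu ^ 2 < Real.sqrt D := by
    rw [show (2 * γ - lam ^ 2 - mu ^ 2 : ℝ) = 2 * γ - lam ^ 2 - mu ^ 2 from rfl]
    have h0 : (0:ℝ) ≤ 2 * γ - lam ^ 2 - mu ^ 2 := by linarith
    rw [Real.lt_sqrt h0]
    nlinarith
  unfold Aplus
  linarith
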